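/- If G is a cactus graph with a vertex z not in an isometric subgraph H of the special form (a cycle with attached pendant isometric paths), then the number of vertices v of H for which there exists a path from z to v meeting H only in v is at most 2. -/

import Mathlib

open SimpleGraph

variable {V : Type*}

/-- `p` restricted to `{0,…,k}` is an isometric path of length `k` in `G`. -/
def IsIsomPath (G : SimpleGraph V) (p : ℕ → V) (k : ℕ) : Prop :=
  ∀ i j, i ≤ k → j ≤ k → G.dist (p i) (p j) = max i j - min i j

def pathVerts (p : ℕ → V) (k : ℕ) : Set V := {x | ∃ i, i ≤ k ∧ p i = x}

noncomputable def ecc (G : SimpleGraph V) [Fintype V] (v : V) : ℕ :=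
  Finset.univ.sup (fun u => G.dist v u)

noncomputable def grad (G : SimpleGraph V) [Fintype V] : ℕ :=
  sInf (Set.range (ecc G))

noncomputable def gdiam (G : SimpleGraph V) [Fintype V] : ℕ :=
  Finset.univ.sup (fun v => ecc G v)

def IsMultipacking (G : SimpleGraph V) [Fintype V] (M : Set V) : Prop :=
  ∀ v : V, ∀ r : ℕ, 1 ≤ r → r ≤ gdiam G →
    (M ∩ {u | G.dist v u ≤ r}).ncard ≤ r

noncomputable def mp (G : SimpleGraph V) [Fintype V] : ℕ :=
  sSup {n | ∃ M : Set V, IsMultipacking G M ∧ M.ncard = n}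

def IsDomBroadcast (G : SimpleGraph V) [Fintype V] (f : V → ℕ) : Prop :=
  (∀ v, f v ≤ gdiam G) ∧ ∀ u : V, ∃ v : V, 1 ≤ f v ∧ G.dist u v ≤ f v

noncomputable def gammaB (G : SimpleGraph V) [Fintype V] : ℕ :=
  sInf {n | ∃ f : V → ℕ, IsDomBroadcast G f ∧ ∑ v, f v = n}

noncomputable def gammaDom (G : SimpleGraph V) [Fintype V] : ℕ :=
  sInf {n | ∃ D : Finset V, (∀ u : V, ∃ v ∈ D, u = v ∨ G.Adj u v) ∧ D.card = n}

def IsFracMP (G : SimpleGraph V) [Fintype V] (w : V → ℝ) : Prop :=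
  (∀ v, 0 ≤ w v) ∧ ∀ v : V, ∀ r : ℕ, 1 ≤ r →
    (∑ u ∈ Finset.univ.filter (fun u => G.dist v u ≤ r), w u) ≤ r

noncomputable def mpf (G : SimpleGraph V) [Fintype V] : ℝ :=
  sSup {s | ∃ w : V → ℝ, IsFracMP G w ∧ ∑ v, w v = s}

/-- A cactus: connected and every edge lies on at most one cycle. -/
def IsCactus (G : SimpleGraph V) : Prop :=
  G.Connected ∧ ∀ (u v : V) (c₁ : G.Walk u u) (c₂ : G.Walk v v),
    c₁.IsCycle → c₂.IsCycle → ∀ e, e ∈ c₁.edges → e ∈ c₂.edges →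
      (∀ e', e' ∈ c₁.edges ↔ e' ∈ c₂.edges)

def pentRel (k : ℕ) (x y : Fin (3*k) × Fin 5) : Prop :=
  (x.1 = y.1 ∧ (x.2.val + 1) % 5 = y.2.val) ∨
  (x.1.val + 1 = y.1.val ∧ x.2.val = 1 ∧ y.2.val = 4)

def Gk (k : ℕ) : SimpleGraph (Fin (3*k) × Fin 5) := SimpleGraph.fromRel (pentRel k)


def cycVerts (cyc : ℕ → V) (γ : ℕ) : Set V := {x | ∃ i, i < γ ∧ cyc i = x}

/-- An isometric subgraph of a cactus consisting of a cycle with three pendant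
isometric paths attached at three distinct cycle vertices. -/
structure SpecialSubgraph (G : SimpleGraph V) where
  γ : ℕ
  hγ : 3 ≤ γ
  cyc : ℕ → V
  cycInj : ∀ i j, i < γ → j < γ → cyc i = cyc j → i = j
  cycAdj : ∀ i, i < γ → G.Adj (cyc i) (cyc ((i+1) % γ))
  t₀ : ℕ
  t₁ : ℕ
  t₂ : ℕ
  ht₀ : t₀ < γ
  ht₁ : t₁ < γ
  ht₂ : t₂ < γ
  hne : t₀ ≠ t₁ ∧ t₁ ≠ t₂ ∧ t₀ ≠ t₂
  la : ℕ
  lb : ℕ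
  ld : ℕ
  pw : ℕ → V
  qw : ℕ → V
  rw : ℕ → V
  hp : IsIsomPath G pw la
  hq : IsIsomPath G qw lb
  hr : IsIsomPath G rw ld
  hp0 : pw 0 = cyc t₀
  hq0 : qw 0 = cyc t₁
  hr0 : rw 0 = cyc t₂
  disjPQ : pathVerts pw la ∩ pathVerts qw lb = ∅
  disjQR : pathVerts qw lb ∩ pathVerts rw ld = ∅
  disjPR : pathVerts pw la ∩ pathVerts rw ld = ∅
  meetP : pathVerts pw la ∩ cycVerts cyc γ = {cyc t₀}
  meetQ : pathVerts qw lb ∩ cycVerts cyc γ = {cyc t₁}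
  meetR : pathVerts rw ld ∩ cycVerts cyc γ = {cyc t₂}

def SpecialSubgraph.verts {G : SimpleGraph V} (H : SpecialSubgraph G) : Set V :=
  cycVerts H.cyc H.γ ∪ pathVerts H.pw H.la ∪ pathVerts H.qw H.lb ∪ pathVerts H.rw H.ld

private lemma chain_walk {G : SimpleGraph V} (p : ℕ → V) (k : ℕ)
    (hadj : ∀ i, i < k → G.Adj (p i) (p (i+1))) :
    ∀ i, i ≤ k → ∃ w : G.Walk (p 0) (p i), ∀ u ∈ w.support, ∃ j, j ≤ i ∧ p j = u := by
  intro i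
  induction i with
  | zero => exact fun _ => ⟨Walk.nil, by simp⟩
  | succ n ih =>
    intro hn
    obtain ⟨w, hw⟩ := ih (by omega)
    refine ⟨w.concat (hadj n (by omega)), ?_⟩
    intro u hu
    rw [Walk.support_concat, List.mem_append] at hu
    rcases hu with hu | hu
    · obtain ⟨j, hj, rfl⟩ := hw u hu; exact ⟨j, by omega, rfl⟩
    · simp only [List.mem_singleton] at hu; exact ⟨n+1, le_refl _, hu.symm⟩

private lemma isom_adj {G : SimpleGraph V} {p : ℕ → V} {k : ℕ}
    (hp : IsIsomPath G p k) : ∀ i, i < k → G.Adj (p i) (p (i+1)) := by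
  intro i hi
  have := hp i (i+1) (by omega) (by omega)
  rw [SimpleGraph.dist_eq_one_iff_adj.symm, this]
  omega

private lemma special_walk {G : SimpleGraph V} (H : SpecialSubgraph G) :
    ∀ x ∈ H.verts, ∃ w : G.Walk x (H.cyc 0), ∀ u ∈ w.support, u ∈ H.verts := by
  -- walks along the cycle
  have hcycadj : ∀ i, i < H.γ - 1 → G.Adj (H.cyc i) (H.cyc (i+1)) := by
    intro i hi
    have := H.cycAdj i (by omega)
    rwa [Nat.mod_eq_of_lt (by omega)] at this
  have hcyc : ∀ i, i < H.γ → ∃ w : G.Walk (H.cyc 0) (H.cyc i),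
      ∀ u ∈ w.support, u ∈ H.verts := by
    intro i hi
    obtain ⟨w, hw⟩ := chain_walk H.cyc (H.γ - 1) hcycadj i (by omega)
    refine ⟨w, fun u hu => ?_⟩
    obtain ⟨j, hj, rfl⟩ := hw u hu
    exact Or.inl (Or.inl (Or.inl ⟨j, by omega, rfl⟩))
  -- generic handler for a pendant path
  have key : ∀ (pw : ℕ → V) (la t : ℕ), IsIsomPath G pw la → t < H.γ → pw 0 = H.cyc t →
      pathVerts pw la ⊆ H.verts →
      ∀ i, i ≤ la → ∃ w : G.Walk (pw i) (H.cyc 0), ∀ u ∈ w.support, u ∈ H.verts := by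
    intro pw la t hiso ht h0 hsub i hi
    obtain ⟨w1, hw1⟩ := chain_walk pw la (isom_adj hiso) i hi
    obtain ⟨w2, hw2⟩ := hcyc t ht
    refine ⟨w1.reverse.append ((w2.reverse).copy h0.symm rfl), fun u hu => ?_⟩
    rw [Walk.mem_support_append_iff] at hu
    rcases hu with hu | hu
    · rw [Walk.support_reverse, List.mem_reverse] at hu
      obtain ⟨j, hj, rfl⟩ := hw1 u hu
      exact hsub ⟨j, by omega, rfl⟩
    · rw [Walk.support_copy, Walk.support_reverse, List.mem_reverse] at hu
      exact hw2 u hu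
  intro x hx
  rcases hx with ((hx | hx) | hx) | hx
  · obtain ⟨i, hi, rfl⟩ := hx
    obtain ⟨w, hw⟩ := hcyc i hi
    refine ⟨w.reverse, fun u hu => ?_⟩
    rw [Walk.support_reverse, List.mem_reverse] at hu
    exact hw u hu
  · obtain ⟨i, hi, rfl⟩ := hx
    exact key H.pw H.la H.t₀ H.hp H.ht₀ H.hp0
      (fun u hu => Or.inl (Or.inl (Or.inr hu))) i hi
  · obtain ⟨i, hi, rfl⟩ := hx
    exact key H.qw H.lb H.t₁ H.hq H.ht₁ H.hq0
      (fun u hu => Or.inl (Or.inr hu)) i hi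
  · obtain ⟨i, hi, rfl⟩ := hx
    exact key H.rw H.ld H.t₂ H.hr H.ht₂ H.hr0
      (fun u hu => Or.inr hu) i hi

/-- In `H` there is a path between any two vertices staying inside `H`. -/
private lemma special_path {G : SimpleGraph V} (H : SpecialSubgraph G)
    {a b : V} (ha : a ∈ H.verts) (hb : b ∈ H.verts) :
    ∃ R : G.Walk a b, R.IsPath ∧ ∀ u ∈ R.support, u ∈ H.verts := by
  classical
  obtain ⟨w1, hw1⟩ := special_walk H a ha
  obtain ⟨w2, hw2⟩ := special_walk H b hb
  refine ⟨(w1.append w2.reverse).bypass, Walk.bypass_isPath _, fun u hu => ?_⟩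
  have := Walk.support_bypass_subset _ hu
  rw [Walk.mem_support_append_iff] at this
  rcases this with h | h
  · exact hw1 u h
  · rw [Walk.support_reverse, List.mem_reverse] at h
    exact hw2 u h

/-- Decompose an attachment path into its last edge and the remaining tail,
which avoids `H` entirely. -/
private lemma attach_decomp {G : SimpleGraph V} (H : SpecialSubgraph G) {z v : V}
    (hz : z ∉ H.verts) (hv : v ∈ H.verts) (W : G.Walk z v) (hW : W.IsPath)
    (hWH : ∀ u ∈ W.support, u ∈ H.verts → u = v) :
    ∃ (w : V) (_ : G.Adj v w) (T : G.Walk w z), ∀ u ∈ T.support, u ∉ H.verts := by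
  have hzv : z ≠ v := fun h => hz (h ▸ hv)
  have hnn : ¬ W.reverse.Nil := by
    rw [Walk.nil_iff_length_eq, Walk.length_reverse]
    intro h
    exact hzv (Walk.eq_of_length_eq_zero h)
  obtain ⟨w, hadj, T, hT⟩ := Walk.not_nil_iff.mp hnn
  have hpath : W.reverse.IsPath := hW.reverse
  have hvT : v ∉ T.support := by
    rw [hT, Walk.cons_isPath_iff] at hpath
    exact hpath.2
  refine ⟨w, hadj, T, fun u hu huH => ?_⟩
  have huW : u ∈ W.support := by
    rw [← List.mem_reverse, ← Walk.support_reverse, hT, Walk.support_cons]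
    exact List.mem_cons_of_mem _ hu
  exact hvT ((hWH u huW huH) ▸ hu)

/-- Build a cycle through two attachment vertices. -/
private lemma pair_cycle {G : SimpleGraph V} (H : SpecialSubgraph G)
    {va vb wa wb z : V} (hva : va ∈ H.verts) (hvb : vb ∈ H.verts) (hab : va ≠ vb)
    (ha : G.Adj va wa) (hb : G.Adj vb wb)
    (Ta : G.Walk wa z) (Tb : G.Walk wb z)
    (hTa : ∀ u ∈ Ta.support, u ∉ H.verts) (hTb : ∀ u ∈ Tb.support, u ∉ H.verts) :
    ∃ C : G.Walk va va, C.IsCycle ∧ s(va, wa) ∈ C.edges ∧ s(vb, wb) ∈ C.edges ∧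
      ∀ e ∈ C.edges, e = s(va, wa) ∨ e = s(vb, wb) ∨
        (∀ x ∈ e, x ∉ H.verts) ∨ (∀ x ∈ e, x ∈ H.verts) := by
  classical
  have hwa : wa ∉ H.verts := hTa _ Ta.start_mem_support
  have hwb : wb ∉ H.verts := hTb _ Tb.start_mem_support
  -- the outside path from wa to wb
  set Q : G.Walk wa wb := (Ta.append Tb.reverse).bypass with hQdef
  have hQpath : Q.IsPath := Walk.bypass_isPath _
  have hQout : ∀ u ∈ Q.support, u ∉ H.verts := by
    intro u hu
    have := Walk.support_bypass_subset _ hu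
    rw [Walk.mem_support_append_iff] at this
    rcases this with h | h
    · exact hTa u h
    · rw [Walk.support_reverse, List.mem_reverse] at h
      exact hTb u h
  -- the inside path from vb to va
  obtain ⟨R, hRpath, hRin⟩ := special_path H hvb hva
  -- assemble
  set D : G.Walk wa va := Q.append (Walk.cons (hb.symm) R) with hDdef
  have hDsupp : D.support = Q.support ++ R.support := by
    rw [hDdef, Walk.support_append, Walk.support_cons, List.tail_cons]
  have hDpath : D.IsPath := by
    rw [Walk.isPath_def, hDsupp]
    rw [List.nodup_append]
    refine ⟨hQpath.support_nodup, hRpath.support_nodup, fun u hu hu' => ?_⟩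
    exact fun hb heq => hQout u hu (by subst heq; exact hRin u hb)
  have hDedges : D.edges = Q.edges ++ (s(wb, vb) :: R.edges) := by
    rw [hDdef, Walk.edges_append, Walk.edges_cons]
  have hna : s(va, wa) ∉ D.edges := by
    rw [hDedges, List.mem_append, List.mem_cons]
    rintro (h | (h | h))
    · exact hQout va (Walk.fst_mem_support_of_mem_edges _ h) hva
    · rw [Sym2.eq_iff] at h
      rcases h with ⟨h1, _⟩ | ⟨h1, h2⟩
      · exact hwb (h1 ▸ hva)
      · exact hab h1
    · exact hwa (hRin wa (Walk.snd_mem_support_of_mem_edges _ h))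
  refine ⟨Walk.cons ha D, ?_, ?_, ?_, ?_⟩
  · exact (Walk.cons_isCycle_iff D ha).mpr ⟨hDpath, hna⟩
  · rw [Walk.edges_cons]; exact List.mem_cons_self
  · rw [Walk.edges_cons, hDedges]
    refine List.mem_cons_of_mem _ ?_
    rw [List.mem_append, List.mem_cons]
    right; left; exact Sym2.eq_swap
  · intro e he
    rw [Walk.edges_cons, List.mem_cons, hDedges, List.mem_append, List.mem_cons] at he
    rcases he with h | (h | (h | h))
    · exact Or.inl h
    · refine Or.inr (Or.inr (Or.inl fun x hx => ?_))
      induction e with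
      | h p q =>
        rw [Sym2.mem_iff] at hx
        rcases hx with rfl | rfl
        · exact hQout x (Walk.fst_mem_support_of_mem_edges _ h)
        · exact hQout x (Walk.snd_mem_support_of_mem_edges _ h)
    · exact Or.inr (Or.inl (h.trans Sym2.eq_swap))
    · refine Or.inr (Or.inr (Or.inr fun x hx => ?_))
      induction e with
      | h p q =>
        rw [Sym2.mem_iff] at hx
        rcases hx with rfl | rfl
        · exact hRin x (Walk.fst_mem_support_of_mem_edges _ h)
        · exact hRin x (Walk.snd_mem_support_of_mem_edges _ h)

theorem cactus_attachment_vertices (G : SimpleGraph V) [Fintype V]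
    (hG : IsCactus G) (H : SpecialSubgraph G) (z : V) (hz : z ∉ H.verts) :
    {v ∈ H.verts | ∃ W : G.Walk z v, W.IsPath ∧
      ∀ u ∈ W.support, u ∈ H.verts → u = v}.ncard ≤ 2 := by
  by_contra hcon
  push_neg at hcon
  obtain ⟨v₁, hv₁, v₂, hv₂, v₃, hv₃, h12, h13, h23⟩ :=
    (Set.two_lt_ncard (Set.toFinite _)).mp hcon
  obtain ⟨hv₁H, W₁, hW₁, hW₁H⟩ := hv₁
  obtain ⟨hv₂H, W₂, hW₂, hW₂H⟩ := hv₂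
  obtain ⟨hv₃H, W₃, hW₃, hW₃H⟩ := hv₃
  obtain ⟨w₁, ha₁, T₁, hT₁⟩ := attach_decomp H hz hv₁H W₁ hW₁ hW₁H
  obtain ⟨w₂, ha₂, T₂, hT₂⟩ := attach_decomp H hz hv₂H W₂ hW₂ hW₂H
  obtain ⟨w₃, ha₃, T₃, hT₃⟩ := attach_decomp H hz hv₃H W₃ hW₃ hW₃H
  have hw₁ : w₁ ∉ H.verts := hT₁ _ T₁.start_mem_support
  have hw₂ : w₂ ∉ H.verts := hT₂ _ T₂.start_mem_support
  have hw₃ : w₃ ∉ H.verts := hT₃ _ T₃.start_mem_support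
  obtain ⟨C₁₂, hC₁₂cyc, hC₁₂a, hC₁₂b, _⟩ :=
    pair_cycle H hv₁H hv₂H h12 ha₁ ha₂ T₁ T₂ hT₁ hT₂
  obtain ⟨C₁₃, hC₁₃cyc, hC₁₃a, _, hC₁₃char⟩ :=
    pair_cycle H hv₁H hv₃H h13 ha₁ ha₃ T₁ T₃ hT₁ hT₃
  have hiff := hG.2 v₁ v₁ C₁₂ C₁₃ hC₁₂cyc hC₁₃cyc s(v₁, w₁) hC₁₂a hC₁₃a
  have hmem : s(v₂, w₂) ∈ C₁₃.edges := (hiff s(v₂, w₂)).mp hC₁₂b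
  rcases hC₁₃char _ hmem with h | h | h | h
  · rw [Sym2.eq_iff] at h
    rcases h with ⟨h1, _⟩ | ⟨h1, _⟩
    · exact h12 h1.symm
    · exact hw₁ (h1 ▸ hv₂H)
  · rw [Sym2.eq_iff] at h
    rcases h with ⟨h1, _⟩ | ⟨h1, _⟩
    · exact h23 h1
    · exact hw₃ (h1 ▸ hv₂H)
  · exact h v₂ (Sym2.mem_mk_left _ _) hv₂H
  · exact hw₂ (h w₂ (Sym2.mem_mk_right _ _))
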